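/- For every prime p, the identity f_2|_p(z) = P_{2,p}(z) · ( f_1|_p(z) )^p holds in 𝔽_p[[z]]. -/

import Mathlib

open PowerSeries

private lemma aux_int (a : ℕ → ℤ)
    (ha : ∀ n : ℕ, (a n : ℚ) =
      ((-1 : ℚ) / (2 * (n : ℚ) - 1)) * (Nat.choose (2 * n) n : ℚ) ^ 2)
    (n : ℕ) : (2 * (n : ℤ) - 1) * a n = -((2 * n).choose n : ℤ) ^ 2 := by
  have h0 : (2 * (n : ℚ) - 1) ≠ 0 := by
    have h : ((2 * (n : ℤ) - 1 : ℤ) : ℚ) = 2 * (n : ℚ) - 1 := by push_cast; ring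
    rw [← h]
    exact_mod_cast (by omega : (2 * (n : ℤ) - 1) ≠ 0)
  have h := ha n
  have h2 : (2 * (n : ℚ) - 1) * (a n : ℚ) = -((2 * n).choose n : ℚ) ^ 2 := by
    field_simp at h
    linarith [h]
  exact_mod_cast h2

private lemma aux_cb (k : ℕ) :
    (2 * (k + 1)).choose (k + 1) = 2 * (2 * k + 1) * catalan k := by
  have h1 := Nat.succ_mul_centralBinom_succ k
  have h2 := succ_mul_catalan_eq_centralBinom k
  have h3 : (k + 1) * Nat.centralBinom (k + 1) = (k + 1) * (2 * (2 * k + 1) * catalan k) := by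
    rw [h1, ← h2]; ring
  have h4 := Nat.eq_of_mul_eq_mul_left (Nat.succ_pos k) h3
  simpa [Nat.centralBinom] using h4

private lemma aux_a_form (a : ℕ → ℤ)
    (ha : ∀ n : ℕ, (a n : ℚ) =
      ((-1 : ℚ) / (2 * (n : ℚ) - 1)) * (Nat.choose (2 * n) n : ℚ) ^ 2)
    (k : ℕ) :
    a (k + 1) = -(2 * ((2 * (k + 1)).choose (k + 1) : ℤ) * catalan k) := by
  have h := aux_int a ha (k + 1)
  have hcb : ((2 * (k + 1)).choose (k + 1) : ℤ) = 2 * (2 * (k : ℤ) + 1) * catalan k := by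
    exact_mod_cast congrArg (Nat.cast : ℕ → ℤ) (aux_cb k)
  have hne : (2 * ((k : ℤ) + 1) - 1) ≠ 0 := by omega
  apply mul_left_cancel₀ hne
  push_cast at h ⊢
  nlinarith [h, hcb]

private lemma aux_lucas (p : ℕ) [Fact p.Prime] (N K : ℕ) :
    ((N.choose K : ZMod p)) =
      ((N % p).choose (K % p) : ZMod p) * ((N / p).choose (K / p) : ZMod p) := by
  have h := Choose.choose_modEq_choose_mod_mul_choose_div (p := p) (n := N) (k := K)
  have h2 := (ZMod.intCast_eq_intCast_iff _ _ _).mpr h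
  push_cast at h2
  exact_mod_cast h2

private lemma aux_key (p : ℕ) (hp : p.Prime) (a : ℕ → ℤ)
    (ha : ∀ n : ℕ, (a n : ℚ) =
      ((-1 : ℚ) / (2 * (n : ℚ) - 1)) * (Nat.choose (2 * n) n : ℚ) ^ 2)
    (q r : ℕ) (hr : r < p) :
    ((a (p * q + r) : ZMod p)) = (a r : ZMod p) * ((2 * q).choose q : ZMod p) ^ 2 := by
  haveI : Fact p.Prime := ⟨hp⟩
  set n := p * q + r with hn
  have hzn : ∀ m : ℕ, ((2 * (m : ℤ) - 1 : ℤ) : ZMod p) * ((a m : ℤ) : ZMod p)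
      = -(((2 * m).choose m : ℕ) : ZMod p) ^ 2 := by
    intro m
    have := congrArg (Int.cast : ℤ → ZMod p) (aux_int a ha m)
    push_cast at this ⊢
    linear_combination this
  have hnr : ((n : ZMod p)) = (r : ZMod p) := by
    rw [hn]; push_cast [ZMod.natCast_self]; ring
  by_cases h2r : 2 * r < p
  · -- case 2r < p
    have hmod : (2 * n) % p = 2 * r := by
      have : 2 * n = p * (2 * q) + 2 * r := by rw [hn]; ring
      rw [this, Nat.mul_add_mod, Nat.mod_eq_of_lt h2r]
    have hdiv : (2 * n) / p = 2 * q := by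
      have : 2 * n = p * (2 * q) + 2 * r := by rw [hn]; ring
      rw [this, Nat.mul_add_div hp.pos, Nat.div_eq_of_lt h2r, add_zero]
    have hnmod : n % p = r := by rw [hn, Nat.mul_add_mod, Nat.mod_eq_of_lt hr]
    have hndiv : n / p = q := by
      rw [hn, Nat.mul_add_div hp.pos, Nat.div_eq_of_lt hr, add_zero]
    have hL : (((2 * n).choose n : ℕ) : ZMod p)
        = ((2 * r).choose r : ZMod p) * ((2 * q).choose q : ZMod p) := by
      rw [aux_lucas p (2 * n) n, hmod, hdiv, hnmod, hndiv]
    have hp2 : 2 ≤ p := hp.two_le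
    have hu : ((2 * (r : ℤ) - 1 : ℤ) : ZMod p) ≠ 0 := by
      intro hc
      rw [ZMod.intCast_zmod_eq_zero_iff_dvd] at hc
      have habs : |2 * (r : ℤ) - 1| < (p : ℤ) := by rw [abs_lt]; omega
      have := Int.eq_zero_of_abs_lt_dvd hc habs
      omega
    apply mul_left_cancel₀ hu
    have e1 := hzn n
    have e2 := hzn r
    have hcast : ((2 * (n : ℤ) - 1 : ℤ) : ZMod p) = ((2 * (r : ℤ) - 1 : ℤ) : ZMod p) := by
      push_cast
      rw [hnr]
    rw [hcast] at e1
    rw [e1, hL]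
    linear_combination (-(((2 * q).choose q : ZMod p)) ^ 2) * e2
  · -- case p ≤ 2r
    have hp2 : 2 ≤ p := hp.two_le
    have hr1 : 1 ≤ r := by omega
    have hCr : (((2 * r).choose r : ℕ) : ZMod p) = 0 := by
      rw [ZMod.natCast_eq_zero_iff]
      exact hp.dvd_choose hr (by omega) (by omega)
    have hCn : (((2 * n).choose n : ℕ) : ZMod p) = 0 := by
      have hp2 : 2 ≤ p := hp.two_le
      have hmod : (2 * n) % p = 2 * r - p := by
        have hexp : p * (2 * q + 1) = p * q + p * q + p := by ring
        have h1 : 2 * n = p * (2 * q + 1) + (2 * r - p) := by omega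
        rw [h1, Nat.mul_add_mod, Nat.mod_eq_of_lt (by omega)]
      have hnmod : n % p = r := by rw [hn, Nat.mul_add_mod, Nat.mod_eq_of_lt hr]
      rw [aux_lucas p (2 * n) n, hmod, hnmod,
        Nat.choose_eq_zero_of_lt (by omega : 2 * r - p < r)]
      simp
    have hform : ∀ m : ℕ, 1 ≤ m → (((2 * m).choose m : ℕ) : ZMod p) = 0 →
        ((a m : ℤ) : ZMod p) = 0 := by
      intro m hm hc
      obtain ⟨k, rfl⟩ := Nat.exists_eq_add_of_le hm
      have := aux_a_form a ha k
      have h2 : ((a (1 + k) : ℤ) : ZMod p)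
          = -(2 * (((2 * (1 + k)).choose (1 + k) : ℕ) : ZMod p) * (catalan k : ZMod p)) := by
        rw [show 1 + k = k + 1 by ring] at *
        rw [this]; push_cast; ring
      rw [show 1 + k = k + 1 by ring] at *
      rw [h2, hc]; ring
    rw [hform n (by omega) hCn, hform r hr1 hCr]
    ring

private lemma aux_pow (p : ℕ) (hp : p.Prime) (f : PowerSeries (ZMod p)) (m : ℕ) :
    PowerSeries.coeff m (f ^ p) =
      if p ∣ m then PowerSeries.coeff (m / p) f else 0 := by
  haveI : Fact p.Prime := ⟨hp⟩
  set F := PowerSeries.trunc (m + 1) f with hF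
  have hdvd : (PowerSeries.X : PowerSeries (ZMod p)) ^ (m + 1) ∣ f - (F : PowerSeries (ZMod p)) := by
    rw [PowerSeries.X_pow_dvd_iff]
    intro i hi
    rw [map_sub, Polynomial.coeff_coe, hF, PowerSeries.coeff_trunc, if_pos hi, sub_self]
  have hdvd2 : (PowerSeries.X : PowerSeries (ZMod p)) ^ (m + 1) ∣
      f ^ p - (F : PowerSeries (ZMod p)) ^ p :=
    dvd_trans hdvd (sub_dvd_pow_sub_pow _ _ p)
  have hc : PowerSeries.coeff m (f ^ p)
      = PowerSeries.coeff m ((F : PowerSeries (ZMod p)) ^ p) := by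
    rw [PowerSeries.X_pow_dvd_iff] at hdvd2
    have h := hdvd2 m (Nat.lt_succ_self m)
    rw [map_sub, sub_eq_zero] at h
    exact h
  have hFp : F ^ p = Polynomial.expand (ZMod p) p F := by
    rw [← Polynomial.map_frobenius_expand, ZMod.frobenius_zmod, Polynomial.map_id]
  rw [hc, ← Polynomial.coe_pow, Polynomial.coeff_coe, hFp,
    Polynomial.coeff_expand hp.pos]
  split_ifs with h
  · rw [hF, PowerSeries.coeff_trunc,
      if_pos (lt_of_le_of_lt (Nat.div_le_self m p) (Nat.lt_succ_self m))]
  · rfl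

theorem stmt10 (p : ℕ) (hp : p.Prime)
    (a : ℕ → ℤ)
    (ha : ∀ n : ℕ, (a n : ℚ) =
      ((-1 : ℚ) / (2 * (n : ℚ) - 1)) * (Nat.choose (2 * n) n : ℚ) ^ 2)
    (f₁p f₂p : PowerSeries (ZMod p)) (P₂p : Polynomial (ZMod p))
    (hf₁p : f₁p = PowerSeries.mk fun n => ((Nat.choose (2 * n) n : ZMod p)) ^ 2)
    (hf₂p : f₂p = PowerSeries.mk fun n => ((a n : ZMod p)))
    (hP₂p : P₂p = ∑ n ∈ Finset.range p, Polynomial.C ((a n : ZMod p)) * Polynomial.X ^ n) :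
    f₂p = (P₂p : PowerSeries (ZMod p)) * f₁p ^ p := by
  haveI : Fact p.Prime := ⟨hp⟩
  have hPc : ∀ i, (PowerSeries.coeff i (P₂p : PowerSeries (ZMod p)))
      = if i < p then ((a i : ZMod p)) else 0 := by
    intro i
    rw [Polynomial.coeff_coe, hP₂p, Polynomial.finset_sum_coeff]
    simp only [Polynomial.coeff_C_mul, Polynomial.coeff_X_pow, mul_ite, mul_one, mul_zero]
    rw [Finset.sum_ite_eq (Finset.range p) i]
    simp [Finset.mem_range]
  have hg : ∀ j, PowerSeries.coeff j (f₁p ^ p)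
      = if p ∣ j then ((2 * (j / p)).choose (j / p) : ZMod p) ^ 2 else 0 := by
    intro j
    rw [aux_pow p hp]
    split_ifs with h
    · rw [hf₁p, PowerSeries.coeff_mk]
    · rfl
  ext m
  rw [hf₂p, PowerSeries.coeff_mk, PowerSeries.coeff_mul]
  rw [Finset.sum_eq_single (m % p, p * (m / p))]
  · rw [hPc, hg, if_pos (Nat.mod_lt _ hp.pos), if_pos (dvd_mul_right p _),
      Nat.mul_div_cancel_left _ hp.pos]
    have hkey := aux_key p hp a ha (m / p) (m % p) (Nat.mod_lt _ hp.pos)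
    rw [Nat.div_add_mod m p] at hkey
    exact hkey
  · rintro ⟨i, j⟩ hmem hne
    rw [Finset.HasAntidiagonal.mem_antidiagonal] at hmem
    rw [hPc, hg]
    by_cases hi : i < p
    · by_cases hj : p ∣ j
      · exfalso
        obtain ⟨k, rfl⟩ := hj
        have h2 : m % p = i := by
          rw [← hmem, Nat.add_mul_mod_self_left]
          exact Nat.mod_eq_of_lt hi
        have h3 : m / p = k := by
          rw [← hmem, Nat.add_mul_div_left _ _ hp.pos, Nat.div_eq_of_lt hi, zero_add]
        exact hne (by rw [h2, h3])
      · rw [if_neg hj, mul_zero]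
    · rw [if_neg hi, zero_mul]
  · intro hmem
    exfalso
    apply hmem
    rw [Finset.HasAntidiagonal.mem_antidiagonal]
    exact Nat.mod_add_div m p
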